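/- arXiv:1709.05182 — 5 statements merged into one kernel-verified Lean document; each statement's English description precedes it below -/
import Mathlib

section
/- For every finite simple graph G with vertex set {v₁,…,vₙ} there exist a finite set Q ⊆ ℝ and real numbers x₁,…,xₙ such that for all i ≠ j, {vᵢ,vⱼ} is an edge of G if and only if (xᵢ + Q) ∩ (xⱼ + Q) ≠ ∅. -/
private lemma exists_li (m : ℕ) : ∃ y : Fin m → ℝ, LinearIndependent ℚ y := by
  classical
  let b := Module.Basis.ofVectorSpace ℚ ℝ
  have hinf : Infinite (Module.Basis.ofVectorSpaceIndex ℚ ℝ) := by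
    by_contra h
    have : Finite (Module.Basis.ofVectorSpaceIndex ℚ ℝ) := not_infinite_iff_finite.mp h
    have : Countable (Module.Basis.ofVectorSpaceIndex ℚ ℝ) := Finite.to_countable
    have hc : Countable (Submodule.span ℚ (Set.range ⇑b)) := inferInstance
    rw [b.span_eq] at hc
    have : Countable ℝ :=
      Countable.of_equiv _ (Submodule.topEquiv (R := ℚ) (M := ℝ)).toEquiv
    exact Cardinal.not_countable_real (Set.countable_univ)
  let f : Fin m ↪ Module.Basis.ofVectorSpaceIndex ℚ ℝ :=
    (Fin.valEmbedding.trans (Infinite.natEmbedding _))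
  exact ⟨b ∘ f, b.linearIndependent.comp f f.injective⟩

private lemma li_eval {m : ℕ} {y : Fin m → ℝ} (hy : LinearIndependent ℚ y)
    (g : Fin m → ℚ) (h : ∑ k, (g k : ℝ) * y k = 0) : ∀ k, g k = 0 := by
  refine Fintype.linearIndependent_iff.mp hy g ?_
  simpa [Rat.smul_def] using h

private lemma sum_delta {m : ℕ} (y : Fin m → ℝ) (p : Fin m) :
    ∑ k, (if k = p then (1:ℝ) else 0) * y k = y p := by
  simp [ite_mul]

private lemma li_eight {m : ℕ} {y : Fin m → ℝ} (hy : LinearIndependent ℚ y)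
    (p1 p2 p3 p4 q1 q2 q3 q4 : Fin m)
    (h : y p1 + y p2 + y p3 + y p4 = y q1 + y q2 + y q3 + y q4) :
    ∀ k : Fin m,
      ((if k = p1 then (1:ℚ) else 0) + (if k = p2 then 1 else 0)
        + (if k = p3 then 1 else 0) + (if k = p4 then 1 else 0))
      = ((if k = q1 then (1:ℚ) else 0) + (if k = q2 then 1 else 0)
        + (if k = q3 then 1 else 0) + (if k = q4 then 1 else 0)) := by
  have key := li_eval hy
    (fun k => ((if k = p1 then (1:ℚ) else 0) + (if k = p2 then 1 else 0)
        + (if k = p3 then 1 else 0) + (if k = p4 then 1 else 0))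
      - ((if k = q1 then (1:ℚ) else 0) + (if k = q2 then 1 else 0)
        + (if k = q3 then 1 else 0) + (if k = q4 then 1 else 0)))
    (by
      have : ∀ k : Fin m,
          ((((if k = p1 then (1:ℚ) else 0) + (if k = p2 then 1 else 0)
            + (if k = p3 then 1 else 0) + (if k = p4 then 1 else 0))
          - ((if k = q1 then (1:ℚ) else 0) + (if k = q2 then 1 else 0)
            + (if k = q3 then 1 else 0) + (if k = q4 then 1 else 0)) : ℚ) : ℝ) * y k
          = ((if k = p1 then (1:ℝ) else 0) * y k + (if k = p2 then (1:ℝ) else 0) * y k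
            + (if k = p3 then (1:ℝ) else 0) * y k + (if k = p4 then (1:ℝ) else 0) * y k)
          - ((if k = q1 then (1:ℝ) else 0) * y k + (if k = q2 then (1:ℝ) else 0) * y k
            + (if k = q3 then (1:ℝ) else 0) * y k + (if k = q4 then (1:ℝ) else 0) * y k) := by
        intro k
        push_cast [apply_ite (fun q : ℚ => (q : ℝ))]
        ring
      rw [Finset.sum_congr rfl (fun k _ => this k)]
      simp only [Finset.sum_sub_distrib, Finset.sum_add_distrib, sum_delta]
      linarith)
  intro k
  have := key k
  linarith

private lemma encode_inj {n a1 b1 a2 b2 : ℕ} (hb1 : b1 < n) (hb2 : b2 < n)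
    (h : n * a1 + b1 = n * a2 + b2) : a1 = a2 ∧ b1 = b2 := by
  rcases Nat.lt_trichotomy a1 a2 with hlt | heq | hgt
  · have h2 : n * (a1 + 1) ≤ n * a2 := Nat.mul_le_mul_left _ hlt
    rw [Nat.mul_add, Nat.mul_one] at h2
    omega
  · subst heq
    exact ⟨rfl, by omega⟩
  · have h2 : n * (a2 + 1) ≤ n * a1 := Nat.mul_le_mul_left _ hgt
    rw [Nat.mul_add, Nat.mul_one] at h2
    omega

/-- Every finite simple graph is the intersection graph of translates of
a finite 1-dimensional point pattern. -/
theorem stmt_3 (n : ℕ) (G : SimpleGraph (Fin n)) :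
    ∃ (Q : Finset ℝ) (x : Fin n → ℝ),
      ∀ i j : Fin n, i ≠ j →
        (G.Adj i j ↔ ∃ q ∈ Q, ∃ q' ∈ Q, x i + q = x j + q') := by
  classical
  obtain ⟨y, hy⟩ := exists_li (n + n * n)
  have hv : ∀ i : Fin n, (i : ℕ) < n + n * n := fun i => by have := i.2; omega
  set v : Fin n → Fin (n + n * n) := fun i => ⟨i, hv i⟩ with hvdef
  have hcode : ∀ a b : Fin n, n + (n * (a : ℕ) + (b : ℕ)) < n + n * n := by
    intro a b
    have h2 : n * ((a : ℕ) + 1) ≤ n * n := Nat.mul_le_mul_left _ a.2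
    rw [Nat.mul_add, Nat.mul_one] at h2
    have := b.2
    omega
  set c : Fin n → Fin n → Fin (n + n * n) :=
    fun a b => ⟨n + (n * (a : ℕ) + (b : ℕ)), hcode a b⟩ with hcdef
  have hvv : ∀ i j : Fin n, v i = v j ↔ i = j := by
    intro i j
    constructor
    · intro h; exact Fin.ext (by simpa [hvdef, Fin.ext_iff] using h)
    · rintro rfl; rfl
  have hcv : ∀ a b i, c a b ≠ v i := by
    intro a b i h
    have := i.2
    simp only [hcdef, hvdef, Fin.ext_iff] at h
    omega
  have hvc : ∀ a b i, v i ≠ c a b := fun a b i h => hcv a b i h.symm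
  have hcc : ∀ a b a' b', c a b = c a' b' ↔ a = a' ∧ b = b' := by
    intro a b a' b'
    constructor
    · intro h
      simp only [hcdef, Fin.ext_iff] at h
      have h2 : n * (a : ℕ) + (b : ℕ) = n * (a' : ℕ) + (b' : ℕ) := by omega
      obtain ⟨h3, h4⟩ := encode_inj b.2 b'.2 h2
      exact ⟨Fin.ext h3, Fin.ext h4⟩
    · rintro ⟨rfl, rfl⟩; rfl
  set x : Fin n → ℝ := fun i => y (v i) with hxdef
  set P : Finset (Fin n × Fin n) := Finset.univ.filter (fun p => G.Adj p.1 p.2) with hP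
  refine ⟨P.image (fun p => y (c p.1 p.2)) ∪
      P.image (fun p => y (c p.1 p.2) + x p.2 - x p.1), x, ?_⟩
  intro i j hij
  have hji : ¬ j = i := fun h => hij h.symm
  constructor
  · intro hadj
    refine ⟨y (c i j) + x j - x i, ?_, y (c i j), ?_, by ring⟩
    · exact Finset.mem_union_right _ (Finset.mem_image.mpr
        ⟨(i, j), by simp [hP, hadj], rfl⟩)
    · exact Finset.mem_union_left _ (Finset.mem_image.mpr
        ⟨(i, j), by simp [hP, hadj], rfl⟩)
  · rintro ⟨q, hq, q', hq', heq⟩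
    rw [Finset.mem_union, Finset.mem_image, Finset.mem_image] at hq hq'
    simp only [hP, Finset.mem_filter, Finset.mem_univ, true_and] at hq hq'
    rcases hq with ⟨⟨a, b⟩, hab, rfl⟩ | ⟨⟨a, b⟩, hab, rfl⟩ <;>
      rcases hq' with ⟨⟨a', b'⟩, hab', rfl⟩ | ⟨⟨a', b'⟩, hab', rfl⟩ <;>
      simp only [hxdef] at heq hab hab'
    -- Case 1 : q = T_{ab}, q' = T_{a'b'}  (impossible)
    · exfalso
      have h1 := li_eight hy (v i) (c a b) (v i) (v i) (v j) (c a' b') (v i) (v i)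
        (by linarith) (v i)
      simp only [hvv, hvc, hcv, hij, hji] at h1
      split_ifs at h1 <;>
            first
            | exact False.elim (by assumption)
            | exact absurd trivial (by assumption)
            | norm_num at h1
    -- Case 2 : q = T_{ab}, q' = T_{a'b'} + x b' - x a'
    · have h8 := li_eight hy (v i) (c a b) (v a') (v i) (v j) (c a' b') (v b') (v i)
        (by linarith)
      by_cases hccc : c a b = c a' b'
      · obtain ⟨rfl, rfl⟩ := (hcc a b a' b').mp hccc
        have h1 := h8 (v i)
        have h2 := h8 (v j)
        simp only [hvv, hvc, hcv, hij, hji] at h1 h2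
        have hbi : i = b := by
          by_contra hc
          rw [if_neg hc] at h1
          split_ifs at h1 <;>
            first
            | exact False.elim (by assumption)
            | exact absurd trivial (by assumption)
            | norm_num at h1
        have haj : j = a := by
          by_contra hc
          rw [if_neg hc] at h2
          split_ifs at h2 <;>
            first
            | exact False.elim (by assumption)
            | exact absurd trivial (by assumption)
            | norm_num at h2
        subst hbi; subst haj
        exact hab.symm
      · exfalso
        have h3 := h8 (c a b)
        simp only [hvv, hvc, hcv, hccc] at h3
        split_ifs at h3 <;>
            first
            | exact False.elim (by assumption)
            | exact absurd trivial (by assumption)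
            | norm_num at h3
    -- Case 3 : q = T_{ab} + x b - x a, q' = T_{a'b'}
    · have h8 := li_eight hy (v i) (c a b) (v b) (v i) (v j) (c a' b') (v a) (v i)
        (by linarith)
      by_cases hccc : c a b = c a' b'
      · obtain ⟨rfl, rfl⟩ := (hcc a b a' b').mp hccc
        have h1 := h8 (v i)
        have h2 := h8 (v j)
        simp only [hvv, hvc, hcv, hij, hji] at h1 h2
        have hai : i = a := by
          by_contra hc
          rw [if_neg hc] at h1
          split_ifs at h1 <;>
            first
            | exact False.elim (by assumption)
            | exact absurd trivial (by assumption)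
            | norm_num at h1
        have hbj : j = b := by
          by_contra hc
          rw [if_neg hc] at h2
          split_ifs at h2 <;>
            first
            | exact False.elim (by assumption)
            | exact absurd trivial (by assumption)
            | norm_num at h2
        subst hai; subst hbj
        exact hab
      · exfalso
        have h3 := h8 (c a b)
        simp only [hvv, hvc, hcv, hccc] at h3
        split_ifs at h3 <;>
            first
            | exact False.elim (by assumption)
            | exact absurd trivial (by assumption)
            | norm_num at h3
    -- Case 4 : both shifted  (impossible)
    · exfalso
      have h8 := li_eight hy (v i) (c a b) (v b) (v a') (v j) (c a' b') (v b') (v a)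
        (by linarith)
      by_cases hccc : c a b = c a' b'
      · obtain ⟨rfl, rfl⟩ := (hcc a b a' b').mp hccc
        have h1 := h8 (v i)
        simp only [hvv, hvc, hcv, hij, hji] at h1
        split_ifs at h1 <;>
            first
            | exact False.elim (by assumption)
            | exact absurd trivial (by assumption)
            | norm_num at h1
      · have h3 := h8 (c a b)
        simp only [hvv, hvc, hcv, hccc] at h3
        split_ifs at h3 <;>
            first
            | exact False.elim (by assumption)
            | exact absurd trivial (by assumption)
            | norm_num at h3
end

section
/- Let G be a graph on vertex set {v₁,…,vₙ} with edges e₁,…,eₘ, and set q = 2(n+m). Define Q = {4^{q+k} − 4^{a(k)} : 1 ≤ k ≤ m} ∪ {4^{q+k} − 4^{b(k)} : 1 ≤ k ≤ m}, where edge e_k joins v_{a(k)} and v_{b(k)} with a(k) < b(k), and set xᵢ = 4^i. Then for all i < j, (xᵢ + Q) ∩ (xⱼ + Q) ≠ ∅ if and only if {vᵢ,vⱼ} is an edge of G. -/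
private lemma pow4_pair : ∀ p q r s : ℕ, 4^p + 4^q = 4^r + 4^s →
    (p = r ∧ q = s) ∨ (p = s ∧ q = r) := by
  have hinj : ∀ {x y : ℕ}, (4:ℕ) ^ x = 4 ^ y → x = y :=
    fun h => Nat.pow_right_injective (by norm_num) h
  intro p
  induction p with
  | zero =>
    intro q r s h
    rcases eq_or_ne r 0 with hr | hr
    · subst hr
      simp only [pow_zero] at h
      have : (4:ℕ)^q = 4^s := by omega
      exact Or.inl ⟨rfl, hinj this⟩
    · rcases eq_or_ne s 0 with hs | hs
      · subst hs
        simp only [pow_zero] at h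
        have : (4:ℕ)^q = 4^r := by omega
        exact Or.inr ⟨rfl, hinj this⟩
      · exfalso
        obtain ⟨u, hu⟩ := dvd_pow_self 4 hr
        obtain ⟨v, hv⟩ := dvd_pow_self 4 hs
        rcases eq_or_ne q 0 with hq | hq
        · subst hq; simp only [pow_zero] at h; omega
        · obtain ⟨w, hw⟩ := dvd_pow_self 4 hq
          simp only [pow_zero] at h; omega
  | succ p ih =>
    intro q r s h
    obtain ⟨t, ht⟩ : (4:ℕ) ∣ 4 ^ (p+1) := dvd_pow_self 4 (Nat.succ_ne_zero p)
    rcases eq_or_ne q 0 with hq | hq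
    · subst hq
      simp only [pow_zero] at h
      rcases eq_or_ne r 0 with hr | hr
      · subst hr
        simp only [pow_zero] at h
        have : (4:ℕ)^(p+1) = 4^s := by omega
        exact Or.inr ⟨hinj this, rfl⟩
      · rcases eq_or_ne s 0 with hs | hs
        · subst hs
          simp only [pow_zero] at h
          have : (4:ℕ)^(p+1) = 4^r := by omega
          exact Or.inl ⟨hinj this, rfl⟩
        · exfalso
          obtain ⟨u, hu⟩ := dvd_pow_self 4 hr
          obtain ⟨v, hv⟩ := dvd_pow_self 4 hs
          omega
    · obtain ⟨w, hw⟩ := dvd_pow_self 4 hq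
      rcases eq_or_ne r 0 with hr | hr
      · exfalso
        subst hr
        simp only [pow_zero] at h
        rcases eq_or_ne s 0 with hs | hs
        · subst hs; simp only [pow_zero] at h; omega
        · obtain ⟨v, hv⟩ := dvd_pow_self 4 hs; omega
      · rcases eq_or_ne s 0 with hs | hs
        · exfalso
          subst hs
          simp only [pow_zero] at h
          obtain ⟨u, hu⟩ := dvd_pow_self 4 hr
          omega
        · -- all positive: divide by 4
          obtain ⟨q', rfl⟩ := Nat.exists_eq_succ_of_ne_zero hq
          obtain ⟨r', rfl⟩ := Nat.exists_eq_succ_of_ne_zero hr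
          obtain ⟨s', rfl⟩ := Nat.exists_eq_succ_of_ne_zero hs
          have h' : 4 ^ p + 4 ^ q' = 4 ^ r' + 4 ^ s' := by
            have : 4 * (4 ^ p + 4 ^ q') = 4 * (4 ^ r' + 4 ^ s') := by
              simp only [pow_succ] at h ⊢; ring_nf at h ⊢; omega
            omega
          rcases ih q' r' s' h' with ⟨h1, h2⟩ | ⟨h1, h2⟩
          · exact Or.inl ⟨by omega, by omega⟩
          · exact Or.inr ⟨by omega, by omega⟩

/-- The explicit construction with powers of 4: translates `4^i + Q` and `4^j + Q`
intersect exactly when `{vᵢ, vⱼ}` is an edge of the graph. -/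
theorem stmt_4 (n m : ℕ) (a b : Fin m → ℕ)
    (ha : ∀ k, 1 ≤ a k) (hab : ∀ k, a k < b k) (hb : ∀ k, b k ≤ n) :
    ∀ i j : ℕ, 1 ≤ i → i < j → j ≤ n →
      ((∃ y ∈ {y : ℝ | ∃ k : Fin m,
            y = (4 : ℝ) ^ (2 * (n + m) + (k : ℕ) + 1) - 4 ^ (a k) ∨
            y = (4 : ℝ) ^ (2 * (n + m) + (k : ℕ) + 1) - 4 ^ (b k)},
        ∃ y' ∈ {y : ℝ | ∃ k : Fin m,
            y = (4 : ℝ) ^ (2 * (n + m) + (k : ℕ) + 1) - 4 ^ (a k) ∨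
            y = (4 : ℝ) ^ (2 * (n + m) + (k : ℕ) + 1) - 4 ^ (b k)},
          (4 : ℝ) ^ i + y = (4 : ℝ) ^ j + y')
        ↔ ∃ k : Fin m, a k = i ∧ b k = j) := by
  intro i j hi hij hjn
  constructor
  · rintro ⟨y, ⟨k, hk⟩, y', ⟨k', hk'⟩, heq⟩
    -- turn into a ℕ equation: 4^i + 4^K + 4^{c'} = 4^j + 4^{K'} + 4^c
    -- where c ∈ {a k, b k}, c' ∈ {a k', b k'}
    have key : ∀ c c' : ℕ, c ≤ n → c' ≤ n →
        (4:ℕ) ^ i + 4 ^ (2*(n+m)+(k:ℕ)+1) + 4 ^ c' =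
          4 ^ j + 4 ^ (2*(n+m)+(k':ℕ)+1) + 4 ^ c →
        (k : ℕ) = k' ∧ i = c ∧ j = c' := by
      intro c c' hc hc' hN
      set K := 2*(n+m)+(k:ℕ)+1 with hK
      set K' := 2*(n+m)+(k':ℕ)+1 with hK'
      have hnK : n < K := by have := k.isLt; omega
      have hnK' : n < K' := by have := k'.isLt; omega
      have hKK' : K = K' := by
        by_contra hne
        have hbig : ∀ (A B : ℕ), A < B → n < A →
            ∀ x z : ℕ, x ≤ n → z ≤ n → 4^x + 4^A + 4^z < 4^B := by
          intro A B hAB hnA x z hx hz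
          have h1 : (4:ℕ)^x ≤ 4^A := Nat.pow_le_pow_right (by norm_num) (by omega)
          have h2 : (4:ℕ)^z ≤ 4^A := Nat.pow_le_pow_right (by norm_num) (by omega)
          have h3 : 4 * 4^A ≤ 4^B := by
            calc 4 * 4^A = 4^(A+1) := by ring
            _ ≤ 4^B := Nat.pow_le_pow_right (by norm_num) (by omega)
          have h4 : 0 < (4:ℕ)^A := Nat.pow_pos (by norm_num)
          omega
        rcases lt_or_gt_of_ne hne with h | h
        · have hlt := hbig K K' h hnK i c' (by omega) hc'
          have h6 : (4:ℕ)^K' ≤ 4^j + 4^K' + 4^c :=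
            le_trans (Nat.le_add_left _ _) (Nat.le_add_right _ _)
          rw [← hN] at h6
          exact absurd h6 (not_le.mpr hlt)
        · have hlt := hbig K' K h hnK' j c (by omega) hc
          have h6 : (4:ℕ)^K ≤ 4^i + 4^K + 4^c' :=
            le_trans (Nat.le_add_left _ _) (Nat.le_add_right _ _)
          rw [hN] at h6
          exact absurd h6 (not_le.mpr hlt)
      have hkk' : (k:ℕ) = k' := by omega
      rw [hKK'] at hN
      have h2 : (4:ℕ) ^ i + 4 ^ c' = 4 ^ j + 4 ^ c := by
        have hN' : (4:ℕ) ^ i + 4 ^ c' + 4 ^ K' = 4 ^ j + 4 ^ c + 4 ^ K' := by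
          linarith [hN]
        exact Nat.add_right_cancel hN'
      rcases pow4_pair i c' j c h2 with ⟨h1, h2⟩ | ⟨h1, h2⟩
      · omega
      · exact ⟨hkk', h1.symm ▸ rfl, by omega⟩
    -- get the real equation into ℕ form for each disjunct
    have toNat : ∀ c c' : ℕ,
        (4:ℝ) ^ i + ((4:ℝ) ^ (2*(n+m)+(k:ℕ)+1) - 4 ^ c) =
          (4:ℝ) ^ j + ((4:ℝ) ^ (2*(n+m)+(k':ℕ)+1) - 4 ^ c') →
        (4:ℕ) ^ i + 4 ^ (2*(n+m)+(k:ℕ)+1) + 4 ^ c' =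
          4 ^ j + 4 ^ (2*(n+m)+(k':ℕ)+1) + 4 ^ c := by
      intro c c' h
      have : ((4 ^ i + 4 ^ (2*(n+m)+(k:ℕ)+1) + 4 ^ c' : ℕ) : ℝ) =
          ((4 ^ j + 4 ^ (2*(n+m)+(k':ℕ)+1) + 4 ^ c : ℕ) : ℝ) := by
        push_cast
        linarith
      exact_mod_cast this
    have hak := hab k; have hbk := hb k
    have hak' := hab k'; have hbk' := hb k'
    rcases hk with rfl | rfl <;> rcases hk' with rfl | rfl
    · -- c = a k, c' = a k'
      have := key (a k) (a k') (by omega) (by omega) (toNat _ _ heq)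
      exfalso
      obtain ⟨hkk, hic, hjc⟩ := this
      have : k = k' := Fin.ext hkk
      subst this; omega
    · have := key (a k) (b k') (by omega) (by omega) (toNat _ _ heq)
      obtain ⟨hkk, hic, hjc⟩ := this
      have : k = k' := Fin.ext hkk
      subst this
      exact ⟨k, hic.symm, hjc.symm⟩
    · have := key (b k) (a k') (by omega) (by omega) (toNat _ _ heq)
      exfalso
      obtain ⟨hkk, hic, hjc⟩ := this
      have : k = k' := Fin.ext hkk
      subst this; omega
    · have := key (b k) (b k') (by omega) (by omega) (toNat _ _ heq)
      exfalso
      obtain ⟨hkk, hic, hjc⟩ := this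
      have : k = k' := Fin.ext hkk
      subst this; omega
  · rintro ⟨k, hak, hbk⟩
    refine ⟨(4:ℝ) ^ (2*(n+m)+(k:ℕ)+1) - 4 ^ (a k), ⟨k, Or.inl rfl⟩,
      (4:ℝ) ^ (2*(n+m)+(k:ℕ)+1) - 4 ^ (b k), ⟨k, Or.inr rfl⟩, ?_⟩
    rw [hak, hbk]
    ring
end

section
/- In any finite set of closed unit intervals on the real line, there exists a minimum dominating set of the induced intersection graph whose chosen intervals are pairwise disjoint. -/
/-- Every finite family of unit intervals admits a minimum dominating set of its
intersection graph whose intervals are pairwise disjoint. -/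
theorem stmt_5 (n : ℕ) (x : Fin n → ℝ) :
    ∃ D : Finset (Fin n),
      (∀ i, ∃ j ∈ D, |x i - x j| ≤ 1) ∧
      (∀ D' : Finset (Fin n), (∀ i, ∃ j ∈ D', |x i - x j| ≤ 1) → D.card ≤ D'.card) ∧
      (∀ i ∈ D, ∀ j ∈ D, i ≠ j → 1 < |x i - x j|) := by
  classical
  let F : Finset (Finset (Fin n)) :=
    Finset.univ.filter (fun D => ∀ i, ∃ j ∈ D, |x i - x j| ≤ 1)
  have hmemF : ∀ D : Finset (Fin n), D ∈ F ↔ ∀ i, ∃ j ∈ D, |x i - x j| ≤ 1 := by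
    intro D; simp [F]
  have hFne : F.Nonempty :=
    ⟨Finset.univ, (hmemF _).2 fun i => ⟨i, Finset.mem_univ i, by simp⟩⟩
  obtain ⟨D0, hD0F, hD0min⟩ := F.exists_min_image (fun D => D.card) hFne
  let F2 : Finset (Finset (Fin n)) := F.filter (fun D => D.card = D0.card)
  have hF2ne : F2.Nonempty := ⟨D0, Finset.mem_filter.2 ⟨hD0F, rfl⟩⟩
  obtain ⟨D, hDF2, hDmax⟩ := F2.exists_max_image (fun D => ∑ j ∈ D, x j) hF2ne
  obtain ⟨hDF, hDcard⟩ := Finset.mem_filter.1 hDF2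
  have hDdom := (hmemF D).1 hDF
  refine ⟨D, hDdom, ?_, ?_⟩
  · intro D' hD'
    have hD'F : D' ∈ F := (hmemF D').2 hD'
    calc D.card = D0.card := hDcard
      _ ≤ D'.card := hD0min D' hD'F
  · -- pairwise disjointness
    have key : ∀ i ∈ D, ∀ j ∈ D, i ≠ j → x i ≤ x j → |x i - x j| ≤ 1 → False := by
      intro i hi j hj hij hle habs
      have habs' := abs_le.1 habs
      -- anything covered by j with value ≤ x j is covered by i
      have hcov_low : ∀ k, |x k - x j| ≤ 1 → x k ≤ x j → |x k - x i| ≤ 1 := by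
        intro k hk hkle
        have hk' := abs_le.1 hk
        rw [abs_le]; constructor <;> linarith [hk'.1, hk'.2, habs'.1, habs'.2]
      -- erasing j cannot give a dominating set
      have herase : ¬ (∀ l, ∃ m ∈ D.erase j, |x l - x m| ≤ 1) := by
        intro h
        have hEF : D.erase j ∈ F := (hmemF _).2 h
        have h1 := hD0min _ hEF
        have h2 : (D.erase j).card < D.card :=
          Finset.card_erase_lt_of_mem hj
        omega
      push_neg at herase
      obtain ⟨k, hk⟩ := herase
      obtain ⟨w, hw, hkw⟩ := hDdom k
      have hwj : w = j := by
        by_contra hne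
        have := hk w (Finset.mem_erase.2 ⟨hne, hw⟩)
        linarith
      subst hwj
      have hki : 1 < |x k - x i| := hk i (Finset.mem_erase.2 ⟨hij, hi⟩)
      have hkgt : x w < x k := by
        by_contra hle'
        push_neg at hle'
        have := hcov_low k hkw hle'
        linarith
      -- j' : the covered vertex of maximal value
      obtain ⟨j', hj'mem, hj'max⟩ :=
        (Finset.univ.filter (fun m => |x m - x w| ≤ 1)).exists_max_image x
          ⟨w, by simp⟩
      have hj'cov : |x j' - x w| ≤ 1 := (Finset.mem_filter.1 hj'mem).2
      have hj'ge : ∀ m, |x m - x w| ≤ 1 → x m ≤ x j' := fun m hm =>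
        hj'max m (Finset.mem_filter.2 ⟨Finset.mem_univ m, hm⟩)
      have hjj' : x w < x j' := lt_of_lt_of_le hkgt (hj'ge k hkw)
      have hj'ne : j' ≠ w := fun h => by rw [h] at hjj'; exact lt_irrefl _ hjj'
      -- the swapped set dominates
      have hdom' : ∀ l, ∃ m ∈ insert j' (D.erase w), |x l - x m| ≤ 1 := by
        intro l
        obtain ⟨v, hv, hlv⟩ := hDdom l
        by_cases hvj : v = w
        · subst hvj
          by_cases hlx : x l ≤ x v
          · exact ⟨i, Finset.mem_insert.2 (Or.inr (Finset.mem_erase.2 ⟨hij, hi⟩)),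
              hcov_low l hlv hlx⟩
          · refine ⟨j', Finset.mem_insert_self _ _, ?_⟩
            push_neg at hlx
            have h1 := abs_le.1 hlv
            have h2 := abs_le.1 hj'cov
            rw [abs_le]; constructor <;> linarith [h1.2, h2.2]
        · exact ⟨v, Finset.mem_insert.2 (Or.inr (Finset.mem_erase.2 ⟨hvj, hv⟩)), hlv⟩
      by_cases hj'D : j' ∈ D
      · -- then erasing w already dominates: contradiction
        have hj'E : j' ∈ D.erase w := Finset.mem_erase.2 ⟨hj'ne, hj'D⟩
        obtain ⟨m, hm, hkm⟩ := hdom' k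
        rcases Finset.mem_insert.1 hm with h | h
        · exact absurd hkm (not_le.2 (by rw [h]; exact hk j' hj'E))
        · exact absurd hkm (not_le.2 (hk m h))
      · -- else swapping strictly increases the sum: contradiction with maximality
        have hj'E : j' ∉ D.erase w := fun h => hj'D (Finset.mem_of_mem_erase h)
        set D' := insert j' (D.erase w) with hD'
        have hD'card : D'.card = D.card := by
          rw [hD', Finset.card_insert_of_notMem hj'E, Finset.card_erase_of_mem hw]
          have : 1 ≤ D.card := Finset.card_pos.2 ⟨w, hw⟩
          omega
        have hD'F2 : D' ∈ F2 := Finset.mem_filter.2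
          ⟨(hmemF _).2 hdom', by rw [hD'card]; exact hDcard⟩
        have hsum := hDmax D' hD'F2
        have hsum' : ∑ m ∈ D', x m = x j' + (∑ m ∈ D, x m - x w) := by
          rw [hD', Finset.sum_insert hj'E]
          have := Finset.sum_erase_add D x hw
          linarith
        rw [hsum'] at hsum
        linarith
    intro i hi j hj hij
    by_contra h
    push_neg at h
    rcases le_total (x i) (x j) with hle | hle
    · exact key i hi j hj hij hle h
    · exact key j hj i hi (Ne.symm hij) hle (by rwa [abs_sub_comm])
end

section
/- Let G = (C ∪ I, E) be a split graph. Construct: a regular 2|I|-gon Q' with inscribed regular |I|-gon Q formed by alternate vertices; for each v ∈ I, a set T(v) which is one of the |I| connected components (triangles) of Q' \ Q, with small disjoint triangles placed inside them; for each u ∈ C, the set P(u) = Q ∪ ⋃{T(v) : v ∈ N_I(u)}. Then every P(u) for u ∈ C is convex. -/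
open Real
namespace Stmt11

noncomputable def e (θ : ℝ) : ℝ × ℝ := (Real.cos θ, Real.sin θ)
def det2 (p q : ℝ × ℝ) : ℝ := p.1 * q.2 - p.2 * q.1
def dot2 (p q : ℝ × ℝ) : ℝ := p.1 * q.1 + p.2 * q.2

lemma det2_e (s t : ℝ) : det2 (e s) (e t) = Real.sin (t - s) := by
  simp [det2, e, Real.sin_sub]; ring

lemma dot2_e (s t : ℝ) : dot2 (e s) (e t) = Real.cos (t - s) := by
  simp [dot2, e, Real.cos_sub]; ring

lemma det2_sub_sub (p q r : ℝ × ℝ) :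
    det2 (p - r) (q - r) = det2 p q - det2 p r - det2 r q := by
  simp [det2, Prod.fst_sub, Prod.snd_sub]; ring

lemma chord_det (μ δ : ℝ) (x : ℝ × ℝ) :
    det2 (e (μ + δ) - e (μ - δ)) (x - e (μ - δ)) =
      2 * Real.sin δ * (Real.cos δ - dot2 x (e μ)) := by
  simp only [det2, dot2, e, Prod.fst_sub, Prod.snd_sub, Real.cos_add, Real.sin_add,
    Real.cos_sub, Real.sin_sub]
  linear_combination (2 * Real.sin δ * Real.cos δ) * Real.sin_sq_add_cos_sq μ

lemma chord_det' (μ δ : ℝ) (x : ℝ × ℝ) :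
    det2 (e (μ - δ) - e (μ + δ)) (x - e (μ + δ)) =
      2 * Real.sin δ * (dot2 x (e μ) - Real.cos δ) := by
  simp only [det2, dot2, e, Prod.fst_sub, Prod.snd_sub, Real.cos_add, Real.sin_add,
    Real.cos_sub, Real.sin_sub]
  linear_combination (-2 * Real.sin δ * Real.cos δ) * Real.sin_sq_add_cos_sq μ

lemma mem_triangle {a b c x : ℝ × ℝ}
    (hD : 0 < det2 (b - a) (c - a))
    (h1 : 0 ≤ det2 (b - a) (x - a))
    (h2 : 0 ≤ det2 (c - b) (x - b))
    (h3 : 0 ≤ det2 (a - c) (x - c)) :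
    x ∈ convexHull ℝ ({a, b, c} : Set (ℝ × ℝ)) := by
  set D := det2 (b - a) (c - a) with hDdef
  set s := det2 (c - b) (x - b) with hs
  set t := det2 (a - c) (x - c) with ht
  set u := det2 (b - a) (x - a) with hu
  have hsum : s + t + u = D := by
    simp only [hs, ht, hu, hDdef, det2, Prod.fst_sub, Prod.snd_sub]; ring
  have hx1 : s * a.1 + t * b.1 + u * c.1 = D * x.1 := by
    simp only [hs, ht, hu, hDdef, det2, Prod.fst_sub, Prod.snd_sub]; ring
  have hx2 : s * a.2 + t * b.2 + u * c.2 = D * x.2 := by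
    simp only [hs, ht, hu, hDdef, det2, Prod.fst_sub, Prod.snd_sub]; ring
  have hcomb : (s / D) • a + (t / D) • b + (u / D) • c = x := by
    have hD' : D ≠ 0 := ne_of_gt hD
    apply Prod.ext
    · simp only [Prod.fst_add, Prod.smul_fst, smul_eq_mul]
      field_simp; linarith [hx1]
    · simp only [Prod.snd_add, Prod.smul_snd, smul_eq_mul]
      field_simp; linarith [hx2]
  rw [← hcomb]
  have hc : Convex ℝ (convexHull ℝ ({a, b, c} : Set (ℝ × ℝ))) := convex_convexHull ℝ _
  have ha' : a ∈ convexHull ℝ ({a, b, c} : Set (ℝ × ℝ)) := subset_convexHull ℝ _ (by simp)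
  have hb' : b ∈ convexHull ℝ ({a, b, c} : Set (ℝ × ℝ)) := subset_convexHull ℝ _ (by simp)
  have hc' : c ∈ convexHull ℝ ({a, b, c} : Set (ℝ × ℝ)) := subset_convexHull ℝ _ (by simp)
  have := hc.sum_mem (t := (Finset.univ : Finset (Fin 3)))
    (w := ![s / D, t / D, u / D]) (z := ![a, b, c])
    (by intro i _
        fin_cases i
        · simpa using div_nonneg h2 hD.le
        · simpa using div_nonneg h3 hD.le
        · simpa using div_nonneg h1 hD.le)
    (by simp [Fin.sum_univ_three]; field_simp; linarith [hsum])
    (by intro i _; fin_cases i <;> simp [ha', hb', hc'])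
  simpa [Fin.sum_univ_three] using this

lemma cos_bound (m : ℕ) (hm : 3 ≤ m) (s t : ℝ) (hs : 0 < s)
    (h1 : s ≤ t) (h2 : t ≤ 2 * m - s) : Real.cos (π * t / m) ≤ Real.cos (π * s / m) := by
  have hm0 : (0:ℝ) < m := by exact_mod_cast Nat.lt_of_lt_of_le (by norm_num) hm
  have key : ∀ u : ℝ, s ≤ u → u ≤ m → Real.cos (π * u / m) ≤ Real.cos (π * s / m) := by
    intro u hu1 hu2
    apply Real.cos_le_cos_of_nonneg_of_le_pi
    · positivity
    · rw [div_le_iff₀ hm0]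
      nlinarith [Real.pi_pos]
    · gcongr
  rcases le_or_gt t m with h | h
  · exact key t h1 h
  · have heq : Real.cos (π * t / m) = Real.cos (π * (2 * m - t) / m) := by
      have h3 : π * t / m = 2 * π - π * (2 * m - t) / m := by field_simp; ring
      rw [h3, Real.cos_two_pi_sub]
    rw [heq]
    exact key _ (by linarith) (by linarith)

lemma cos_bound_abs (m : ℕ) (hm : 3 ≤ m) (s t : ℝ) (hs : 0 < s)
    (h1 : s ≤ |t|) (h2 : |t| ≤ 2 * m - s) : Real.cos (π * t / m) ≤ Real.cos (π * s / m) := by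
  have : Real.cos (π * t / m) = Real.cos (π * |t| / m) := by
    rcases abs_cases t with ⟨h, _⟩ | ⟨h, _⟩
    · rw [h]
    · rw [h, show π * -t / m = -(π * t / m) by ring, Real.cos_neg]
  rw [this]
  exact cos_bound m hm s |t| hs h1 h2

lemma cos_half_bound (m : ℕ) (hm : 3 ≤ m) (c d : ℕ) (hc : c ≤ 2 * m - 1) (hd : d ≤ 2 * m - 1) :
    Real.cos (π * ((c:ℝ) + 1/2 - d) / m) ≤ Real.cos (π * (1/2) / m) := by
  have hm' : 1 ≤ m := by omega
  have hc' : (c:ℝ) ≤ 2 * m - 1 := by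
    have : (c:ℝ) ≤ ((2*m-1 : ℕ) : ℝ) := by exact_mod_cast hc
    push_cast [Nat.cast_sub (by omega : 1 ≤ 2*m)] at this; linarith
  have hd' : (d:ℝ) ≤ 2 * m - 1 := by
    have : (d:ℝ) ≤ ((2*m-1 : ℕ) : ℝ) := by exact_mod_cast hd
    push_cast [Nat.cast_sub (by omega : 1 ≤ 2*m)] at this; linarith
  apply cos_bound_abs m hm (1/2) _ (by norm_num)
  · rcases le_or_gt d c with h | h
    · have : (d:ℝ) ≤ c := by exact_mod_cast h
      rw [abs_of_nonneg (by linarith)]; linarith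
    · have : (c:ℝ) + 1 ≤ d := by exact_mod_cast h
      rw [abs_of_nonpos (by linarith)]; linarith
  · have h0c : (0:ℝ) ≤ c := Nat.cast_nonneg c
    have h0d : (0:ℝ) ≤ d := Nat.cast_nonneg d
    rcases le_or_gt d c with h | h
    · have : (d:ℝ) ≤ c := by exact_mod_cast h
      rw [abs_of_nonneg (by linarith)]; linarith
    · have : (c:ℝ) + 1 ≤ d := by exact_mod_cast h
      rw [abs_of_nonpos (by linarith)]; linarith

lemma cos_int_bound (m : ℕ) (hm : 3 ≤ m) (c d : ℕ) (hc : c ≤ 2 * m - 1) (hd : d ≤ 2 * m - 1)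
    (hne : c ≠ d) :
    Real.cos (π * ((c:ℝ) - d) / m) ≤ Real.cos (π * 1 / m) := by
  have hc' : (c:ℝ) ≤ 2 * m - 1 := by
    have : (c:ℝ) ≤ ((2*m-1 : ℕ) : ℝ) := by exact_mod_cast hc
    push_cast [Nat.cast_sub (by omega : 1 ≤ 2*m)] at this; linarith
  have hd' : (d:ℝ) ≤ 2 * m - 1 := by
    have : (d:ℝ) ≤ ((2*m-1 : ℕ) : ℝ) := by exact_mod_cast hd
    push_cast [Nat.cast_sub (by omega : 1 ≤ 2*m)] at this; linarith
  apply cos_bound_abs m hm 1 _ (by norm_num)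
  · rcases lt_or_gt_of_ne hne with h | h
    · have : (c:ℝ) + 1 ≤ d := by exact_mod_cast h
      rw [abs_of_nonpos (by linarith)]; linarith
    · have : (d:ℝ) + 1 ≤ c := by exact_mod_cast h
      rw [abs_of_nonneg (by linarith)]; linarith
  · have h0c : (0:ℝ) ≤ c := Nat.cast_nonneg c
    have h0d : (0:ℝ) ≤ d := Nat.cast_nonneg d
    rcases lt_or_gt_of_ne hne with h | h
    · have : (c:ℝ) + 1 ≤ d := by exact_mod_cast h
      rw [abs_of_nonpos (by linarith)]; linarith
    · have : (d:ℝ) + 1 ≤ c := by exact_mod_cast h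
      rw [abs_of_nonneg (by linarith)]; linarith



def Qset (m : ℕ) : Set (ℝ × ℝ) :=
  {p | ∃ i < m, p = (Real.cos (π * (2 * i) / m), Real.sin (π * (2 * i) / m))}

noncomputable def Tri (m i : ℕ) : Set (ℝ × ℝ) :=
  {e (π * (2 * (i:ℝ)) / m), e (π * (2 * (i:ℝ) + 1) / m), e (π * (2 * (i:ℝ) + 2) / m)}

lemma centroid (m : ℕ) (hm : 3 ≤ m) :
    ∑ i ∈ Finset.range m, e (π * (2 * (i:ℝ)) / m) = 0 := by
  have hm0 : (0:ℝ) < m := by exact_mod_cast Nat.lt_of_lt_of_le (by norm_num) hm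
  have hm0' : (m:ℂ) ≠ 0 := by exact_mod_cast ne_of_gt hm0
  set z : ℂ := Complex.exp ((2 * π / m : ℝ) * Complex.I) with hz
  have hz1 : z ≠ 1 := by
    intro h
    simp only [hz] at h
    have hre : Real.cos (2 * π / m) = 1 := by
      have := congrArg Complex.re h
      rw [Complex.exp_ofReal_mul_I_re] at this
      simpa using this
    have h2 : 2 * π / m < 2 * π := by
      rw [div_lt_iff₀ hm0]
      have hm3 : (3:ℝ) ≤ m := by exact_mod_cast hm
      nlinarith [Real.pi_pos, hm3]
    have h3 : (0:ℝ) < 2 * π / m := by positivity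
    rw [Real.cos_eq_one_iff_of_lt_of_lt (by linarith) h2] at hre
    linarith
  have hzm : z ^ m = 1 := by
    rw [hz, ← Complex.exp_nat_mul]
    have : (m:ℂ) * ((2 * π / m : ℝ) * Complex.I) = 2 * π * Complex.I := by
      push_cast
      field_simp
    rw [this, Complex.exp_two_pi_mul_I]
  have hsum : ∑ i ∈ Finset.range m, z ^ i = 0 := by
    rw [geom_sum_eq hz1, hzm]
    simp
  have hzi : ∀ i : ℕ, z ^ i = Complex.exp ((π * (2 * (i:ℝ)) / m : ℝ) * Complex.I) := by
    intro i
    rw [hz, ← Complex.exp_nat_mul]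
    congr 1
    push_cast
    ring
  have hre : ∀ i ∈ Finset.range m, (z ^ i).re = Real.cos (π * (2 * (i:ℝ)) / m) := by
    intro i _; rw [hzi i, Complex.exp_ofReal_mul_I_re]
  have him : ∀ i ∈ Finset.range m, (z ^ i).im = Real.sin (π * (2 * (i:ℝ)) / m) := by
    intro i _; rw [hzi i, Complex.exp_ofReal_mul_I_im]
  apply Prod.ext
  · have h1 := congrArg Complex.re hsum
    rw [Complex.re_sum, Finset.sum_congr rfl hre] at h1
    simpa [e, Prod.fst_sum] using h1
  · have h1 := congrArg Complex.im hsum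
    rw [Complex.im_sum, Finset.sum_congr rfl him] at h1
    simpa [e, Prod.snd_sum] using h1

lemma zero_mem_hull (m : ℕ) (hm : 3 ≤ m) : (0:ℝ×ℝ) ∈ convexHull ℝ (Qset m) := by
  have hm0 : (0:ℝ) < m := by exact_mod_cast Nat.lt_of_lt_of_le (by norm_num) hm
  have h := Finset.centerMass_mem_convexHull (s := Qset m) (t := Finset.range m)
    (w := fun _ => (1:ℝ))
    (z := fun i => e (π * (2 * (i:ℝ)) / m)) (by intro i _; norm_num)
    (by rw [Finset.sum_const]; simpa using hm0)
    (by intro i hi; exact ⟨i, Finset.mem_range.mp hi, rfl⟩)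
  rwa [Finset.centerMass,
    show ∑ i ∈ Finset.range m, (1:ℝ) • e (π * (2 * (i:ℝ)) / m) = 0 by
      simpa using centroid m hm, smul_zero] at h

lemma convex_halfplane (a b c : ℝ) : Convex ℝ {x : ℝ × ℝ | x.1 * a + x.2 * b ≤ c} := by
  have h : IsLinearMap ℝ (fun x : ℝ × ℝ => x.1 * a + x.2 * b) := by
    constructor
    · intro x y; simp [Prod.fst_add, Prod.snd_add]; ring
    · intro r x; simp [Prod.smul_fst, Prod.smul_snd, smul_eq_mul]; ring
  exact convex_halfSpace_le h c

lemma next_vertex (m i : ℕ) (hm : 3 ≤ m) (hi : i < m) :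
    e (π * (2 * (i:ℝ) + 2) / m) ∈ Qset m := by
  have hm0 : (0:ℝ) < m := by exact_mod_cast Nat.lt_of_lt_of_le (by norm_num) hm
  rcases lt_or_eq_of_le (Nat.succ_le_of_lt hi) with h | h
  · refine ⟨i + 1, h, ?_⟩
    have : π * (2 * (i:ℝ) + 2) / m = π * (2 * ((i:ℕ)+1 : ℕ)) / m := by push_cast; ring
    rw [e, this]
  · refine ⟨0, by omega, ?_⟩
    have hir : (i:ℝ) = m - 1 := by
      have : ((i:ℕ) + 1 : ℝ) = m := by exact_mod_cast congrArg (Nat.cast : ℕ → ℝ) h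
      push_cast at this; linarith
    have h2 : π * (2 * (i:ℝ) + 2) / m = 2 * π := by
      rw [hir]; field_simp; ring
    rw [e, h2]
    norm_num [Real.cos_two_pi, Real.sin_two_pi]

end Stmt11
set_option maxHeartbeats 2000000 in
open Stmt11 in
/-- The union of the regular `m`-gon `Q` (on every second vertex of a regular
`2m`-gon `Q'`) with any subset of the corner triangles of `Q' \ Q` is convex. -/
theorem stmt_11 (m : ℕ) (hm : 3 ≤ m) (A : Finset ℕ) (hA : ∀ i ∈ A, i < m) :
    Convex ℝ
      ((convexHull ℝ {p : ℝ × ℝ | ∃ i < m,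
          p = (Real.cos (π * (2 * i) / m), Real.sin (π * (2 * i) / m))}) ∪
       ⋃ i ∈ A, convexHull ℝ
         ({(Real.cos (π * (2 * i) / m), Real.sin (π * (2 * i) / m)),
           (Real.cos (π * (2 * i + 1) / m), Real.sin (π * (2 * i + 1) / m)),
           (Real.cos (π * (2 * i + 2) / m), Real.sin (π * (2 * i + 2) / m))} : Set (ℝ × ℝ))) := by
  have hQrw : {p : ℝ × ℝ | ∃ i < m,
      p = (Real.cos (π * (2 * i) / m), Real.sin (π * (2 * i) / m))} = Qset m := rfl
  have hTrw : ∀ i : ℕ,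
      ({(Real.cos (π * (2 * i) / m), Real.sin (π * (2 * i) / m)),
        (Real.cos (π * (2 * i + 1) / m), Real.sin (π * (2 * i + 1) / m)),
        (Real.cos (π * (2 * i + 2) / m), Real.sin (π * (2 * i + 2) / m))} : Set (ℝ × ℝ))
      = Tri m i := fun i => rfl
  rw [hQrw]
  simp only [hTrw]
  have hm0 : (0:ℝ) < m := by exact_mod_cast Nat.lt_of_lt_of_le (by norm_num) hm
  have hm3 : (3:ℝ) ≤ m := by exact_mod_cast hm
  have hπ := Real.pi_pos
  have hsin1 : 0 < Real.sin (π * 1 / m) := by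
    apply Real.sin_pos_of_pos_of_lt_pi
    · positivity
    · rw [div_lt_iff₀ hm0]; nlinarith
  have hsinh : 0 < Real.sin (π * (1/2) / m) := by
    apply Real.sin_pos_of_pos_of_lt_pi
    · positivity
    · rw [div_lt_iff₀ hm0]; nlinarith
  set S : Set (ℝ × ℝ) := Qset m ∪ ⋃ i ∈ A, {e (π * (2 * (i:ℝ) + 1) / m)} with hSdef
  -- transfer of halfplane bounds to the hull
  have hull_bound : ∀ (μ c : ℝ), (∀ p ∈ S, dot2 p (e μ) ≤ c) →
      ∀ x ∈ convexHull ℝ S, dot2 x (e μ) ≤ c := by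
    intro μ c hp x hx
    have hsub : convexHull ℝ S ⊆ {z : ℝ × ℝ | z.1 * (e μ).1 + z.2 * (e μ).2 ≤ c} :=
      convexHull_min (fun p hps => hp p hps) (convex_halfplane _ _ _)
    exact hsub hx
  -- pointwise bounds on S
  have bound_half : ∀ c : ℕ, c ≤ 2*m - 1 →
      ∀ p ∈ S, dot2 p (e (π * ((c:ℝ) + 1/2) / m)) ≤ Real.cos (π * (1/2) / m) := by
    intro c hc p hp
    rcases hp with ⟨j, hj, rfl⟩ | hp
    · show dot2 (e (π * (2 * (j:ℝ)) / m)) _ ≤ _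
      rw [dot2_e, show π * ((c:ℝ) + 1/2) / m - π * (2 * (j:ℝ)) / m
          = π * ((c:ℝ) + 1/2 - ((2*j : ℕ):ℝ)) / m by push_cast; ring]
      exact cos_half_bound m hm c (2*j) hc (by omega)
    · simp only [Set.mem_iUnion] at hp
      obtain ⟨i, hiA, hp⟩ := hp
      rcases Set.mem_singleton_iff.mp hp with rfl
      rw [dot2_e, show π * ((c:ℝ) + 1/2) / m - π * (2 * (i:ℝ) + 1) / m
          = π * ((c:ℝ) + 1/2 - ((2*i+1 : ℕ):ℝ)) / m by push_cast; ring]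
      exact cos_half_bound m hm c (2*i+1) hc (by have := hA i hiA; omega)
  have bound_int : ∀ k : ℕ, k < m → k ∉ A →
      ∀ p ∈ S, dot2 p (e (π * (2 * (k:ℝ) + 1) / m)) ≤ Real.cos (π * 1 / m) := by
    intro k hk hkA p hp
    rcases hp with ⟨j, hj, rfl⟩ | hp
    · show dot2 (e (π * (2 * (j:ℝ)) / m)) _ ≤ _
      rw [dot2_e, show π * (2 * (k:ℝ) + 1) / m - π * (2 * (j:ℝ)) / m
          = π * (((2*k+1 : ℕ):ℝ) - ((2*j : ℕ):ℝ)) / m by push_cast; ring]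
      exact cos_int_bound m hm (2*k+1) (2*j) (by omega) (by omega) (by omega)
    · simp only [Set.mem_iUnion] at hp
      obtain ⟨i, hiA, hp⟩ := hp
      rcases Set.mem_singleton_iff.mp hp with rfl
      rw [dot2_e, show π * (2 * (k:ℝ) + 1) / m - π * (2 * (i:ℝ) + 1) / m
          = π * (((2*k+1 : ℕ):ℝ) - ((2*i+1 : ℕ):ℝ)) / m by push_cast; ring]
      have hik : i ≠ k := fun h => hkA (h ▸ hiA)
      exact cos_int_bound m hm (2*k+1) (2*i+1) (by omega)
        (by have := hA i hiA; omega) (by omega)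
  -- direction 1 : the union is inside the hull of S
  have hsub1 : (convexHull ℝ (Qset m)) ∪ (⋃ i ∈ A, convexHull ℝ (Tri m i))
      ⊆ convexHull ℝ S := by
    apply Set.union_subset
    · exact convexHull_mono Set.subset_union_left
    · apply Set.iUnion₂_subset
      intro i hiA
      apply convexHull_mono
      intro p hp
      simp only [Tri, Set.mem_insert_iff, Set.mem_singleton_iff] at hp
      rcases hp with rfl | rfl | rfl
      · exact Or.inl ⟨i, hA i hiA, rfl⟩
      · exact Or.inr (Set.mem_biUnion hiA rfl)
      · exact Or.inl (next_vertex m i hm (hA i hiA))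
  clear_value S
  clear hSdef
  -- direction 2 : the hull of S is inside the union
  have hsub2 : convexHull ℝ S ⊆
      (convexHull ℝ (Qset m)) ∪ (⋃ i ∈ A, convexHull ℝ (Tri m i)) := by
    intro x hx
    by_cases hcase : ∀ k, k < m → dot2 x (e (π * (2 * (k:ℝ) + 1) / m)) ≤ Real.cos (π * 1 / m)
    · -- x is in the inner polygon
      left
      rcases eq_or_ne x 0 with rfl | hx0
      · exact zero_mem_hull m hm
      set z : ℂ := ⟨x.1, x.2⟩ with hzdef
      have hz0 : z ≠ 0 := by
        intro h
        apply hx0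
        have h1 := congrArg Complex.re h
        have h2 := congrArg Complex.im h
        exact Prod.ext h1 h2
      set r := ‖z‖ with hrdef
      have hr : 0 < r := norm_pos_iff.mpr hz0
      set φ := Complex.arg z with hφdef
      have hx1 : x.1 = r * Real.cos φ := by
        rw [hφdef, Complex.cos_arg hz0]
        field_simp [hrdef]
        rw [hrdef]; exact mul_comm _ _
      have hx2 : x.2 = r * Real.sin φ := by
        rw [hφdef, Complex.sin_arg]
        field_simp [hrdef]
        rw [hrdef]; exact mul_comm _ _
      set φ' : ℝ := if 0 ≤ φ then φ else φ + 2*π with hφ'def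
      have hφ'0 : 0 ≤ φ' := by
        rw [hφ'def]; split_ifs with h
        · exact h
        · nlinarith [Complex.neg_pi_lt_arg z]
      have hφ'2 : φ' < 2*π := by
        rw [hφ'def]; split_ifs with h
        · nlinarith [Complex.arg_le_pi z]
        · push_neg at h; linarith
      have hcosφ : Real.cos φ' = Real.cos φ := by
        rw [hφ'def]; split_ifs with h
        · rfl
        · exact Real.cos_add_two_pi φ
      have hsinφ : Real.sin φ' = Real.sin φ := by
        rw [hφ'def]; split_ifs with h
        · rfl
        · exact Real.sin_add_two_pi φ
      set j : ℕ := (⌊φ' * m / (2*π)⌋).toNat with hjdef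
      have hfl0 : (0:ℤ) ≤ ⌊φ' * m / (2*π)⌋ := Int.floor_nonneg.mpr (by positivity)
      have hjcast : (j:ℝ) = (⌊φ' * m / (2*π)⌋ : ℤ) := by
        rw [hjdef]; exact_mod_cast congrArg (Int.cast : ℤ → ℝ) (Int.toNat_of_nonneg hfl0)
      have hj1 : (j:ℝ) ≤ φ' * m / (2*π) := hjcast ▸ Int.floor_le _
      have hj2 : φ' * m / (2*π) < (j:ℝ) + 1 := by
        rw [hjcast]; exact Int.lt_floor_add_one _
      have hjm : j < m := by
        have h1 : φ' * m / (2*π) < m := by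
          rw [div_lt_iff₀ (by positivity)]
          nlinarith
        have : (j:ℝ) < m := lt_of_le_of_lt hj1 h1
        exact_mod_cast this
      clear hjdef hφ'def hφdef hrdef hzdef
      clear_value j φ' φ r z
      rw [le_div_iff₀ (by positivity : (0:ℝ) < 2*π)] at hj1
      rw [div_lt_iff₀ (by positivity : (0:ℝ) < 2*π)] at hj2
      have hαφ : π * (2 * (j:ℝ)) / m ≤ φ' := by
        rw [div_le_iff₀ hm0]; nlinarith
      have hφβ : φ' < π * (2 * (j:ℝ) + 2) / m := by
        rw [lt_div_iff₀ hm0]; nlinarith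
      have hwidth : π * (2 * (j:ℝ) + 2) / m - π * (2 * (j:ℝ)) / m ≤ π := by
        rw [show π * (2 * (j:ℝ) + 2) / m - π * (2 * (j:ℝ)) / m = π * 2 / m by ring]
        rw [div_le_iff₀ hm0]; nlinarith
      have hd1 : 0 ≤ det2 (e (π * (2 * (j:ℝ)) / m)) x := by
        have heq : det2 (e (π * (2 * (j:ℝ)) / m)) x
            = r * Real.sin (φ' - π * (2 * (j:ℝ)) / m) := by
          simp only [det2, e, hx1, hx2, ← hcosφ, ← hsinφ, Real.sin_sub]
          ring
        rw [heq]
        apply mul_nonneg hr.le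
        apply Real.sin_nonneg_of_nonneg_of_le_pi (by linarith) (by linarith)
      have hd2 : 0 ≤ det2 x (e (π * (2 * (j:ℝ) + 2) / m)) := by
        have heq : det2 x (e (π * (2 * (j:ℝ) + 2) / m))
            = r * Real.sin (π * (2 * (j:ℝ) + 2) / m - φ') := by
          simp only [det2, e, hx1, hx2, ← hcosφ, ← hsinφ, Real.sin_sub]
          ring
        rw [heq]
        apply mul_nonneg hr.le
        apply Real.sin_nonneg_of_nonneg_of_le_pi (by linarith) (by linarith)
      have hmem : x ∈ convexHull ℝ
          ({(0:ℝ×ℝ), e (π * (2 * (j:ℝ)) / m), e (π * (2 * (j:ℝ) + 2) / m)} : Set (ℝ×ℝ)) := by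
        apply mem_triangle
        · rw [sub_zero, sub_zero, det2_e,
            show π * (2 * (j:ℝ) + 2) / m - π * (2 * (j:ℝ)) / m = π * 2 / m by ring]
          apply Real.sin_pos_of_pos_of_lt_pi
          · positivity
          · rw [div_lt_iff₀ hm0]; nlinarith
        · rw [sub_zero, sub_zero]; exact hd1
        · rw [show π * (2 * (j:ℝ) + 2) / m = (π * (2 * (j:ℝ) + 1) / m) + π * 1 / m by ring,
            show π * (2 * (j:ℝ)) / m = (π * (2 * (j:ℝ) + 1) / m) - π * 1 / m by ring,
            chord_det]
          have hcj := hcase j hjm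
          exact mul_nonneg (mul_nonneg (by norm_num) hsin1.le) (by linarith)
        · have heq : det2 ((0:ℝ×ℝ) - e (π * (2 * (j:ℝ) + 2) / m))
              (x - e (π * (2 * (j:ℝ) + 2) / m)) = det2 x (e (π * (2 * (j:ℝ) + 2) / m)) := by
            simp only [det2, Prod.fst_sub, Prod.snd_sub, Prod.fst_zero, Prod.snd_zero]
            ring
          rw [heq]; exact hd2
      refine convexHull_min ?_ (convex_convexHull ℝ _) hmem
      intro p hp
      simp only [Set.mem_insert_iff, Set.mem_singleton_iff] at hp
      rcases hp with rfl | rfl | rfl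
      · exact zero_mem_hull m hm
      · exact subset_convexHull ℝ _ ⟨j, hjm, rfl⟩
      · exact subset_convexHull ℝ _ (next_vertex m j hm hjm)
    · -- x is in one of the triangles
      right
      push_neg at hcase
      obtain ⟨k, hk, hgt⟩ := hcase
      have hkA : k ∈ A := by
        by_contra hkA
        have := hull_bound _ _ (bound_int k hk hkA) x hx
        linarith
      have hb1 := hull_bound _ _ (bound_half (2*k) (by omega)) x hx
      have hb2 := hull_bound _ _ (bound_half (2*k+1) (by omega)) x hx
      push_cast at hb1 hb2
      have hmem : x ∈ convexHull ℝ (Tri m k) := by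
        apply mem_triangle
        · rw [det2_sub_sub, det2_e, det2_e, det2_e,
            show π * (2 * (k:ℝ) + 2) / m - π * (2 * (k:ℝ) + 1) / m = π * 1 / m by ring,
            show π * (2 * (k:ℝ)) / m - π * (2 * (k:ℝ) + 1) / m = -(π * 1 / m) by ring,
            show π * (2 * (k:ℝ) + 2) / m - π * (2 * (k:ℝ)) / m = 2 * (π * 1 / m) by ring,
            Real.sin_neg, Real.sin_two_mul]
          have hcd : Real.cos (π * 1 / m) < 1 := by
            have h := Real.cos_lt_cos_of_nonneg_of_le_pi (le_refl (0:ℝ))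
              (by rw [div_le_iff₀ hm0]; nlinarith) (by positivity : (0:ℝ) < π * 1 / m)
            simpa using h
          nlinarith [mul_pos hsin1 (sub_pos.mpr hcd)]
        · rw [show π * (2 * (k:ℝ) + 1) / m = (π * (2 * (k:ℝ) + 1/2) / m) + π * (1/2) / m by
              ring,
            show π * (2 * (k:ℝ)) / m = (π * (2 * (k:ℝ) + 1/2) / m) - π * (1/2) / m by ring,
            chord_det]
          exact mul_nonneg (mul_nonneg (by norm_num) hsinh.le) (by linarith [hb1])
        · rw [show π * (2 * (k:ℝ) + 2) / m = (π * (2 * (k:ℝ) + 1 + 1/2) / m) + π * (1/2) / m by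
              ring,
            show π * (2 * (k:ℝ) + 1) / m = (π * (2 * (k:ℝ) + 1 + 1/2) / m) - π * (1/2) / m by
              ring,
            chord_det]
          exact mul_nonneg (mul_nonneg (by norm_num) hsinh.le) (by linarith [hb2])
        · rw [show π * (2 * (k:ℝ)) / m = (π * (2 * (k:ℝ) + 1) / m) - π * 1 / m by ring,
            show π * (2 * (k:ℝ) + 2) / m = (π * (2 * (k:ℝ) + 1) / m) + π * 1 / m by ring,
            chord_det']
          exact mul_nonneg (mul_nonneg (by norm_num) hsin1.le) (by linarith [hgt])
      exact Set.mem_biUnion hkA hmem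
  rw [Set.Subset.antisymm hsub1 hsub2]
  exact convex_convexHull ℝ S
end

section
/- Let D be a minimum dominating set of the intersection graph of n unit intervals [xᵢ, xᵢ+1], and let X(D) be the multiset of left endpoints of the intervals in D. Then for every real y, |X(D) ∩ [y, y+1]| ≤ 3. -/
open scoped Classical

/-- Any minimum dominating set of a unit interval graph has at most 3 left
endpoints in any window of width 1. -/
theorem stmt_17 (n : ℕ) (x : Fin n → ℝ) (D : Finset (Fin n))
    (hdom : ∀ i, ∃ j ∈ D, |x i - x j| ≤ 1)
    (hmin : ∀ D' : Finset (Fin n), (∀ i, ∃ j ∈ D', |x i - x j| ≤ 1) → D.card ≤ D'.card) :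
    ∀ y : ℝ, (D.filter fun i => x i ∈ Set.Icc y (y + 1)).card ≤ 3 := by
  intro y
  by_contra h
  push_neg at h
  set S := D.filter (fun i => x i ∈ Set.Icc y (y + 1)) with hS
  have hSne : S.Nonempty := Finset.card_pos.mp (by omega)
  obtain ⟨a, haS, ha⟩ := S.exists_min_image x hSne
  obtain ⟨b, hbS, hb⟩ := S.exists_max_image x hSne
  have hSsub : S ⊆ D := Finset.filter_subset _ _
  have hmem : ∀ j ∈ S, y ≤ x j ∧ x j ≤ y + 1 := by
    intro j hj
    have := (Finset.mem_filter.mp hj).2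
    simpa [Set.mem_Icc] using this
  set D' := (D \ S) ∪ {a, b} with hD'
  have hdom' : ∀ i, ∃ j ∈ D', |x i - x j| ≤ 1 := by
    intro i
    obtain ⟨j, hjD, hj⟩ := hdom i
    by_cases hjS : j ∈ S
    · rw [abs_le] at hj
      have ha' := ha j hjS
      have hb' := hb j hjS
      have hma := hmem a haS
      have hmb := hmem b hbS
      by_cases hc : x i ≤ x a + 1
      · exact ⟨a, by simp [hD'], by rw [abs_le]; constructor <;> linarith⟩
      · exact ⟨b, by simp [hD'], by rw [abs_le]; constructor <;> linarith⟩
    · exact ⟨j, by simp [hD', hjD, hjS], hj⟩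
  have hcard : D'.card < D.card := by
    have h1 : D'.card ≤ (D \ S).card + 2 := by
      calc D'.card ≤ (D \ S).card + ({a, b} : Finset (Fin n)).card :=
            Finset.card_union_le _ _
        _ ≤ (D \ S).card + 2 := by
            have : ({a, b} : Finset (Fin n)).card ≤ 2 :=
              (Finset.card_insert_le _ _).trans (by simp)
            omega
    have h2 : (D \ S).card = D.card - S.card := Finset.card_sdiff_of_subset hSsub
    have h3 : S.card ≤ D.card := Finset.card_le_card hSsub
    omega
  exact absurd (hmin D' hdom') (by omega)
end
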